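/- Let b(z) = Π_{i=1}^{n} (z − α_i)/(1 − conj(α_i) z) be a finite Blaschke product with zeros α₁,...,α_n ∈ 𝔻, and set δ(b) = min_i (1 − |α_i|). Then for each real 𝔭 with 1 ≤ 𝔭 < ∞ there exist constants c, C > 0 depending only on n and 𝔭 such that c·δ(b)^{1−𝔭} ≤ ∫_𝕋 |b′(ζ)|^𝔭 |dζ| ≤ C·δ(b)^{1−𝔭}. -/

import Mathlib

open Real

noncomputable def BD (r θ : ℝ) : ℝ := 1 - 2*r*Real.cos θ + r^2
noncomputable def BQ (r θ : ℝ) : ℝ := (1 - r^2) / BD r θ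

lemma BD_pos {r : ℝ} (h0 : 0 ≤ r) (h1 : r < 1) (θ : ℝ) : 0 < BD r θ := by
  have := Real.cos_le_one θ
  have := Real.neg_one_le_cos θ
  unfold BD; nlinarith [sq_nonneg (1 - r), sq_nonneg (1 + r)]

lemma BQ_pos {r : ℝ} (h0 : 0 ≤ r) (h1 : r < 1) (θ : ℝ) : 0 < BQ r θ := by
  have hd := BD_pos h0 h1 θ
  have : 0 < 1 - r^2 := by nlinarith
  exact div_pos this hd

lemma BQ_cont {r : ℝ} (h0 : 0 ≤ r) (h1 : r < 1) : Continuous (BQ r) := by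
  apply Continuous.div continuous_const
  · unfold BD; fun_prop
  · exact fun θ => (BD_pos h0 h1 θ).ne'

lemma BQ_periodic (r : ℝ) : Function.Periodic (BQ r) (2 * π) := by
  intro θ; unfold BQ BD; rw [Real.cos_add_two_pi]

-- lower pointwise bound near 0
lemma BQ_ge {r θ : ℝ} (h0 : 0 ≤ r) (h1 : r < 1) (ht0 : 0 ≤ θ) (ht1 : θ ≤ 1 - r) :
    1 / (2 * (1 - r)) ≤ BQ r θ := by
  have hd := BD_pos h0 h1 θ
  have hcos : 1 - θ^2/2 ≤ Real.cos θ := Real.one_sub_sq_div_two_le_cos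
  have hD : BD r θ ≤ 2 * (1 - r)^2 := by unfold BD; nlinarith
  have hnum : 1 - r ≤ 1 - r^2 := by nlinarith
  have h1r : (0:ℝ) < 1 - r := by linarith
  unfold BQ
  rw [div_le_div_iff₀ (by positivity) hd]
  calc 1 * BD r θ ≤ 2 * (1 - r)^2 := by linarith
    _ = (1 - r) * (2 * (1 - r)) := by ring
    _ ≤ (1 - r^2) * (2 * (1 - r)) := by nlinarith

-- upper bound for small r
lemma BQ_le_three {r θ : ℝ} (h0 : 0 ≤ r) (h2 : r ≤ 1/2) : BQ r θ ≤ 3 := by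
  have h1 : r < 1 := by linarith
  have h1r : (0:ℝ) < 1 - r := by linarith
  have hd := BD_pos h0 h1 θ
  have hD : (1 - r)^2 ≤ BD r θ := by
    have := Real.cos_le_one θ; unfold BD; nlinarith
  have : BQ r θ ≤ (1 - r^2) / (1 - r)^2 := by
    apply div_le_div_of_nonneg_left (by nlinarith) (pow_pos h1r 2) hD
  calc BQ r θ ≤ (1 - r^2) / (1 - r)^2 := this
    _ ≤ 3 := by
        rw [div_le_iff₀ (pow_pos h1r 2)]; nlinarith

-- upper bound for large r, |θ| ≤ π
lemma BQ_le_big {r θ : ℝ} (h2 : 1/2 ≤ r) (h1 : r < 1) (ht : |θ| ≤ π) :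
    BQ r θ ≤ π^2 * ((1 - r) / ((1 - r)^2 + θ^2)) := by
  have h0 : (0:ℝ) ≤ r := by linarith
  have h1r : (0:ℝ) < 1 - r := by linarith
  have hd := BD_pos h0 h1 θ
  have hcos : Real.cos θ ≤ 1 - 2 / π ^ 2 * θ ^ 2 := Real.cos_le_one_sub_mul_cos_sq ht
  have hpi : (0:ℝ) < π := Real.pi_pos
  have hpisq : (0:ℝ) < π^2 := by positivity
  have hD : (2/π^2) * ((1 - r)^2 + θ^2) ≤ BD r θ := by
    have h2pi : 2/π^2 ≤ 1 := by
      rw [div_le_one hpisq]; nlinarith [Real.pi_gt_three]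
    have h3 : (2/π^2) * θ^2 ≤ 2*r*(2/π^2 * θ^2) := by
      nlinarith [mul_nonneg (by positivity : (0:ℝ) ≤ 2/π^2*θ^2) (by linarith : (0:ℝ) ≤ 2*r - 1)]
    unfold BD; nlinarith [sq_nonneg θ]
  have hnum : 1 - r^2 ≤ 2 * (1 - r) := by nlinarith
  have hden2 : (0:ℝ) < (1 - r)^2 + θ^2 :=
    add_pos_of_pos_of_nonneg (pow_pos h1r 2) (sq_nonneg θ)
  have key : BQ r θ ≤ (2 * (1 - r)) / ((2/π^2) * ((1 - r)^2 + θ^2)) := by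
    unfold BQ
    apply div_le_div₀ (by linarith) hnum (by positivity) hD
  calc BQ r θ ≤ (2 * (1 - r)) / ((2/π^2) * ((1 - r)^2 + θ^2)) := key
    _ = π^2 * ((1 - r) / ((1 - r)^2 + θ^2)) := by
        field_simp

lemma BQp_cont {r : ℝ} (h0 : 0 ≤ r) (h1 : r < 1) (p : ℝ) (hp0 : 0 ≤ p) :
    Continuous fun θ => BQ r θ ^ p :=
  (BQ_cont h0 h1).rpow_const (fun _ => Or.inr hp0)

lemma BQ_int_lower {p : ℝ} (hp : 1 ≤ p) {r : ℝ} (h0 : 0 ≤ r) (h1 : r < 1) :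
    (1/2 : ℝ)^p * (1 - r)^(1 - p) ≤ ∫ θ in (0:ℝ)..(2*π), BQ r θ ^ p := by
  have hp0 : (0:ℝ) ≤ p := by linarith
  have h1r : (0:ℝ) < 1 - r := by linarith
  have hc : Continuous fun θ => BQ r θ ^ p := BQp_cont h0 h1 p hp0
  have hle : 1 - r ≤ 2 * π := by nlinarith [Real.pi_gt_three]
  have hsplit : (∫ θ in (0:ℝ)..(1-r), BQ r θ ^ p) + (∫ θ in (1-r)..(2*π), BQ r θ ^ p)
      = ∫ θ in (0:ℝ)..(2*π), BQ r θ ^ p :=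
    intervalIntegral.integral_add_adjacent_intervals (hc.intervalIntegrable _ _)
      (hc.intervalIntegrable _ _)
  have h2 : 0 ≤ ∫ θ in (1-r)..(2*π), BQ r θ ^ p :=
    intervalIntegral.integral_nonneg hle
      (fun x _ => Real.rpow_nonneg (BQ_pos h0 h1 x).le p)
  have h3 : (1 - r) * (1/(2*(1-r)))^p ≤ ∫ θ in (0:ℝ)..(1-r), BQ r θ ^ p := by
    have hmono : ∀ x ∈ Set.Icc (0:ℝ) (1-r), (1/(2*(1-r)))^p ≤ BQ r x ^ p := by
      intro x hx
      exact Real.rpow_le_rpow (by positivity) (BQ_ge h0 h1 hx.1 hx.2) hp0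
    have := intervalIntegral.integral_mono_on h1r.le
      (intervalIntegrable_const (μ := MeasureTheory.volume)) (hc.intervalIntegrable _ _) hmono
    simpa using this
  have heq : (1 - r) * (1/(2*(1-r)))^p = (1/2:ℝ)^p * (1 - r)^(1-p) := by
    have e1 : (1 - r)^(1-p) = (1-r) / (1-r)^p := by
      rw [Real.rpow_sub h1r, Real.rpow_one]
    have e2 : (1/(2*(1-r)))^p = 1 / (2^p * (1-r)^p) := by
      rw [one_div, Real.inv_rpow (by positivity), Real.mul_rpow (by norm_num) h1r.le, one_div]
    have e3 : (1/2:ℝ)^p = 1/2^p := by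
      rw [one_div, Real.inv_rpow (by norm_num), one_div]
    rw [e1, e2, e3]
    have n1 : (2:ℝ)^p ≠ 0 := (Real.rpow_pos_of_pos (by norm_num) p).ne'
    have n2 : (1-r)^p ≠ 0 := (Real.rpow_pos_of_pos h1r p).ne'
    field_simp
  linarith [heq ▸ h3]

lemma rpow_tail_int {p s : ℝ} (hp : 1 ≤ p) (hs : 0 < s) (hsπ : s ≤ π) :
    (∫ θ in s..π, θ^(-2*p)) ≤ s^(-2*p+1) := by
  have h0 : (0:ℝ) ∉ Set.uIcc s π := by
    rw [Set.uIcc_of_le hsπ]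
    intro h; exact absurd h.1 (not_le.mpr hs)
  have hne : -2*p ≠ -1 := by intro h; nlinarith
  rw [integral_rpow (Or.inr ⟨hne, h0⟩)]
  have hBA : π^(-2*p+1) ≤ s^(-2*p+1) :=
    Real.rpow_le_rpow_of_nonpos hs hsπ (by linarith)
  have hB : 0 ≤ π^(-2*p+1) := Real.rpow_nonneg Real.pi_pos.le _
  have hA : 0 ≤ s^(-2*p+1) := Real.rpow_nonneg hs.le _
  have hden : -2*p+1 ≤ -1 := by linarith
  rw [div_le_iff_of_neg (by linarith : -2*p+1 < 0)]
  nlinarith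

lemma H_int {p s : ℝ} (hp : 1 ≤ p) (hs : 0 < s) (hs2 : s ≤ 1/2) :
    (∫ θ in (0:ℝ)..π, (s/(s^2+θ^2))^p) ≤ 2 * s^(1-p) := by
  have hp0 : (0:ℝ) ≤ p := by linarith
  have hsπ : s ≤ π := by nlinarith [Real.pi_gt_three]
  have hden : ∀ θ : ℝ, (0:ℝ) < s^2 + θ^2 :=
    fun θ => add_pos_of_pos_of_nonneg (pow_pos hs 2) (sq_nonneg θ)
  have hHc : Continuous fun θ : ℝ => (s/(s^2+θ^2))^p := by
    apply Continuous.rpow_const _ (fun _ => Or.inr hp0)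
    exact Continuous.div continuous_const (by fun_prop) (fun θ => (hden θ).ne')
  have hsplit : (∫ θ in (0:ℝ)..s, (s/(s^2+θ^2))^p) + (∫ θ in s..π, (s/(s^2+θ^2))^p)
      = ∫ θ in (0:ℝ)..π, (s/(s^2+θ^2))^p :=
    intervalIntegral.integral_add_adjacent_intervals (hHc.intervalIntegrable _ _)
      (hHc.intervalIntegrable _ _)
  have hs1p : s^(1-p) = s / s^p := by rw [Real.rpow_sub hs, Real.rpow_one]
  have hsppos : (0:ℝ) < s^p := Real.rpow_pos_of_pos hs p
  -- piece 1
  have hpt1 : ∀ θ ∈ Set.Icc (0:ℝ) s, (s/(s^2+θ^2))^p ≤ (1/s)^p := by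
    intro θ _
    apply Real.rpow_le_rpow (by positivity) _ hp0
    calc s/(s^2+θ^2) ≤ s/s^2 :=
          div_le_div_of_nonneg_left hs.le (pow_pos hs 2) (by nlinarith [sq_nonneg θ])
      _ = 1/s := by rw [sq]; field_simp
  have h1 : (∫ θ in (0:ℝ)..s, (s/(s^2+θ^2))^p) ≤ s^(1-p) := by
    have := intervalIntegral.integral_mono_on hs.le (hHc.intervalIntegrable _ _)
      (intervalIntegrable_const (μ := MeasureTheory.volume)) hpt1
    have he : s * s⁻¹ ^ p = s^(1-p) := by
      rw [Real.inv_rpow hs.le, hs1p]; field_simp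
    simpa [he] using this
  -- piece 2
  have hpt2 : ∀ θ ∈ Set.Icc s π, (s/(s^2+θ^2))^p ≤ s^p * θ^(-2*p) := by
    intro θ hθ
    have hθ0 : 0 < θ := lt_of_lt_of_le hs hθ.1
    have hbase : s/(s^2+θ^2) ≤ s/θ^2 :=
      div_le_div_of_nonneg_left hs.le (pow_pos hθ0 2) (by nlinarith [sq_nonneg s])
    have he : (s/θ^2)^p = s^p * θ^(-2*p) := by
      rw [Real.div_rpow hs.le (sq_nonneg θ), ← Real.rpow_natCast θ 2,
        ← Real.rpow_mul hθ0.le, div_eq_mul_inv, ← Real.rpow_neg hθ0.le]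
      norm_num
    calc (s/(s^2+θ^2))^p ≤ (s/θ^2)^p := Real.rpow_le_rpow (by positivity) hbase hp0
      _ = s^p * θ^(-2*p) := he
  have hInt2 : IntervalIntegrable (fun θ : ℝ => s^p * θ^(-2*p)) MeasureTheory.volume s π := by
    apply ContinuousOn.intervalIntegrable
    apply ContinuousOn.mul continuousOn_const
    apply ContinuousOn.rpow_const continuousOn_id
    intro x hx
    rw [Set.uIcc_of_le hsπ] at hx
    exact Or.inl (ne_of_gt (lt_of_lt_of_le hs hx.1))
  have h2 : (∫ θ in s..π, (s/(s^2+θ^2))^p) ≤ s^(1-p) := by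
    have hm := intervalIntegral.integral_mono_on hsπ (hHc.intervalIntegrable _ _) hInt2 hpt2
    have ht : (∫ θ in s..π, s^p * θ^(-2*p)) = s^p * ∫ θ in s..π, θ^(-2*p) :=
      intervalIntegral.integral_const_mul _ _
    have htail := rpow_tail_int hp hs hsπ
    have he : s^p * s^(-2*p+1) = s^(1-p) := by
      rw [← Real.rpow_add hs]; ring_nf
    calc (∫ θ in s..π, (s/(s^2+θ^2))^p) ≤ s^p * ∫ θ in s..π, θ^(-2*p) := by rw [← ht]; exact hm
      _ ≤ s^p * s^(-2*p+1) := by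
          apply mul_le_mul_of_nonneg_left htail hsppos.le
      _ = s^(1-p) := he
  linarith [hsplit ▸ add_le_add h1 h2]

lemma Hcont {p s : ℝ} (hp0 : 0 ≤ p) (hs : 0 < s) :
    Continuous fun θ : ℝ => (s/(s^2+θ^2))^p := by
  apply Continuous.rpow_const _ (fun _ => Or.inr hp0)
  exact Continuous.div continuous_const (by fun_prop)
    (fun θ => (add_pos_of_pos_of_nonneg (pow_pos hs 2) (sq_nonneg θ)).ne')

lemma BQ_int_upper {p : ℝ} (hp : 1 ≤ p) {r : ℝ} (h0 : 0 ≤ r) (h1 : r < 1) :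
    (∫ θ in (0:ℝ)..(2*π), BQ r θ ^ p) ≤ (2*π*3^p + 4*π^(2*p)) * (1 - r)^(1-p) := by
  have hp0 : (0:ℝ) ≤ p := by linarith
  have h1r : (0:ℝ) < 1 - r := by linarith
  have hc := BQp_cont h0 h1 p hp0
  have hδ1 : (1:ℝ) ≤ (1-r)^(1-p) :=
    Real.one_le_rpow_of_pos_of_le_one_of_nonpos h1r (by linarith) (by linarith)
  have hπ := Real.pi_pos
  have hA : (0:ℝ) ≤ 2*π*3^p := by positivity
  have hB : (0:ℝ) ≤ 4*π^(2*p) := by positivity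
  rcases le_or_gt r (1/2) with hr | hr
  · have hpt : ∀ θ ∈ Set.Icc (0:ℝ) (2*π), BQ r θ ^ p ≤ (3:ℝ)^p := fun θ _ =>
      Real.rpow_le_rpow (BQ_pos h0 h1 θ).le (BQ_le_three h0 hr) hp0
    have hm := intervalIntegral.integral_mono_on (by positivity) (hc.intervalIntegrable _ _)
      (intervalIntegrable_const (μ := MeasureTheory.volume)) hpt
    calc (∫ θ in (0:ℝ)..(2*π), BQ r θ ^ p) ≤ 2*π*3^p := by
          simpa [smul_eq_mul, mul_comm] using hm
      _ ≤ (2*π*3^p) * (1-r)^(1-p) := le_mul_of_one_le_right hA hδ1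
      _ ≤ (2*π*3^p + 4*π^(2*p)) * (1-r)^(1-p) := by
          nlinarith [Real.rpow_nonneg h1r.le (1-p)]
  · have hs : (0:ℝ) < 1 - r := h1r
    have hs2 : 1 - r ≤ 1/2 := by linarith
    have hGc := Hcont (s := 1 - r) hp0 hs
    have hden : ∀ θ : ℝ, (0:ℝ) < (1-r)^2 + θ^2 :=
      fun θ => add_pos_of_pos_of_nonneg (pow_pos hs 2) (sq_nonneg θ)
    -- periodic shift to [-π, π]
    have hper : (∫ θ in (0:ℝ)..(2*π), BQ r θ ^ p) = ∫ θ in (-π)..π, BQ r θ ^ p := by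
      have hP : Function.Periodic (fun θ => BQ r θ ^ p) (2*π) := (BQ_periodic r).comp (·^p)
      have h := hP.intervalIntegral_add_eq (-π) 0
      rw [show -π + 2*π = π by ring, zero_add] at h
      exact h.symm
    -- pointwise bound
    have hpt : ∀ θ ∈ Set.Icc (-π) π,
        BQ r θ ^ p ≤ π^(2*p) * ((1-r)/((1-r)^2+θ^2))^p := by
      intro θ hθ
      have habs : |θ| ≤ π := abs_le.mpr ⟨hθ.1, hθ.2⟩
      have hq : (0:ℝ) ≤ (1-r)/((1-r)^2+θ^2) := div_nonneg hs.le (hden θ).le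
      calc BQ r θ ^ p ≤ (π^2 * ((1-r)/((1-r)^2+θ^2)))^p :=
            Real.rpow_le_rpow (BQ_pos h0 h1 θ).le (BQ_le_big hr.le h1 habs) hp0
        _ = π^(2*p) * ((1-r)/((1-r)^2+θ^2))^p := by
            rw [Real.mul_rpow (by positivity) hq, ← Real.rpow_natCast π 2,
              ← Real.rpow_mul Real.pi_pos.le]
            norm_num
    have hmono := intervalIntegral.integral_mono_on (by linarith : -π ≤ π)
      (hc.intervalIntegrable _ _) (((continuous_const.mul hGc).intervalIntegrable _ _ : IntervalIntegrable _ MeasureTheory.volume _ _)) hpt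
    -- evenness and splitting
    have heven : (∫ θ in (-π)..(0:ℝ), ((1-r)/((1-r)^2+θ^2))^p)
        = ∫ θ in (0:ℝ)..π, ((1-r)/((1-r)^2+θ^2))^p := by
      have h := intervalIntegral.integral_comp_neg (a := (0:ℝ)) (b := π)
        (fun θ => ((1-r)/((1-r)^2+θ^2))^p)
      simp only [neg_sq, neg_zero] at h
      exact h.symm
    have hsplitG : (∫ θ in (-π)..(0:ℝ), ((1-r)/((1-r)^2+θ^2))^p)
          + (∫ θ in (0:ℝ)..π, ((1-r)/((1-r)^2+θ^2))^p)
        = ∫ θ in (-π)..π, ((1-r)/((1-r)^2+θ^2))^p :=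
      intervalIntegral.integral_add_adjacent_intervals (hGc.intervalIntegrable _ _)
        (hGc.intervalIntegrable _ _)
    have hH := H_int hp hs hs2
    have hGtot : (∫ θ in (-π)..π, ((1-r)/((1-r)^2+θ^2))^p) ≤ 4 * (1-r)^(1-p) := by
      rw [← hsplitG, heven]; linarith
    have hmul : (∫ θ in (-π)..π, π^(2*p) * ((1-r)/((1-r)^2+θ^2))^p)
        = π^(2*p) * ∫ θ in (-π)..π, ((1-r)/((1-r)^2+θ^2))^p :=
      intervalIntegral.integral_const_mul _ _
    have hπ2p : (0:ℝ) ≤ π^(2*p) := Real.rpow_nonneg hπ.le _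
    calc (∫ θ in (0:ℝ)..(2*π), BQ r θ ^ p)
        = ∫ θ in (-π)..π, BQ r θ ^ p := hper
      _ ≤ ∫ θ in (-π)..π, π^(2*p) * ((1-r)/((1-r)^2+θ^2))^p := hmono
      _ = π^(2*p) * ∫ θ in (-π)..π, ((1-r)/((1-r)^2+θ^2))^p := hmul
      _ ≤ π^(2*p) * (4 * (1-r)^(1-p)) := mul_le_mul_of_nonneg_left hGtot hπ2p
      _ ≤ (2*π*3^p + 4*π^(2*p)) * (1-r)^(1-p) := by
          nlinarith [Real.rpow_nonneg h1r.le (1-p)]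

lemma blaschke_factor_hasDeriv (a ζ : ℂ) (hz : 1 - (starRingEnd ℂ) a * ζ ≠ 0) :
    HasDerivAt (fun z : ℂ => (z - a) / (1 - (starRingEnd ℂ) a * z))
      ((1 - (starRingEnd ℂ) a * a) / (1 - (starRingEnd ℂ) a * ζ)^2) ζ := by
  have h1 : HasDerivAt (fun z : ℂ => z - a) 1 ζ := (hasDerivAt_id ζ).sub_const a
  have h2 : HasDerivAt (fun z : ℂ => 1 - (starRingEnd ℂ) a * z) (-((starRingEnd ℂ) a)) ζ := by
    simpa using (((hasDerivAt_id ζ).const_mul ((starRingEnd ℂ) a)).const_sub 1)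
  have h := h1.fun_div h2 hz
  refine h.congr_deriv ?_
  have hz2 : ((1 : ℂ) - (starRingEnd ℂ) a * ζ)^2 ≠ 0 := pow_ne_zero 2 hz
  ring

lemma normSq_one_sub (a : ℂ) (θ : ℝ) :
    Complex.normSq (1 - (starRingEnd ℂ) a * Complex.exp (θ * Complex.I))
      = BD (‖a‖) (θ - Complex.arg a) := by
  have expand : ∀ w : ℂ, Complex.normSq (1 - w) = 1 - 2*w.re + Complex.normSq w := by
    intro w
    simp [Complex.normSq_apply, Complex.sub_re, Complex.sub_im]
    ring
  have hre : ((starRingEnd ℂ) a * Complex.exp (θ * Complex.I)).re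
      = ‖a‖ * Real.cos (θ - Complex.arg a) := by
    have h1 : ((starRingEnd ℂ) a * Complex.exp (θ * Complex.I)).re
        = a.re * Real.cos θ + a.im * Real.sin θ := by
      simp [Complex.exp_mul_I, Complex.mul_re, Complex.add_re, Complex.add_im, Complex.mul_im,
        Complex.cos_ofReal_re, Complex.sin_ofReal_re, Complex.cos_ofReal_im,
        Complex.sin_ofReal_im]
    rw [h1, Real.cos_sub]
    linear_combination (- Real.cos θ) * Complex.norm_mul_cos_arg a
      - Real.sin θ * Complex.norm_mul_sin_arg a
  have hns : Complex.normSq ((starRingEnd ℂ) a * Complex.exp (θ * Complex.I))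
      = (‖a‖)^2 := by
    rw [Complex.normSq_mul, Complex.normSq_eq_norm_sq, Complex.normSq_eq_norm_sq]
    rw [Complex.norm_conj, Complex.norm_exp_ofReal_mul_I]
    ring
  rw [expand, hre, hns]
  unfold BD
  ring

lemma blaschke_deriv_abs {n : ℕ} (α : Fin n → ℂ) (hα : ∀ i, ‖α i‖ < 1) (θ : ℝ) :
    ‖deriv (fun z : ℂ => ∏ i, (z - α i) / (1 - (starRingEnd ℂ) (α i) * z))
      (Complex.exp (θ * Complex.I))‖
    = ∑ i, BQ (‖α i‖) (θ - Complex.arg (α i)) := by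
  set ζ := Complex.exp (θ * Complex.I) with hζdef
  have hζ : ‖ζ‖ = 1 := Complex.norm_exp_ofReal_mul_I θ
  have hζ0 : ζ ≠ 0 := by
    intro h; rw [h] at hζ; simp at hζ
  have hden : ∀ i, (1 : ℂ) - (starRingEnd ℂ) (α i) * ζ ≠ 0 := by
    intro i h
    have h2 : (starRingEnd ℂ) (α i) * ζ = 1 := by linear_combination -h
    have h3 : ‖(starRingEnd ℂ) (α i) * ζ‖ = 1 := by rw [h2]; simp
    rw [norm_mul, Complex.norm_conj, hζ, mul_one] at h3
    exact absurd h3 (ne_of_lt (hα i))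
  have hnum : ∀ i, ζ - α i ≠ 0 := by
    intro i h
    have h1 : ζ = α i := by linear_combination h
    have h2 := hα i
    rw [← h1, hζ] at h2
    exact lt_irrefl 1 h2
  have hnsζ : Complex.normSq ζ = 1 := by rw [Complex.normSq_eq_norm_sq, hζ]; norm_num
  have hmc : ζ * (starRingEnd ℂ) ζ = 1 := by
    rw [Complex.mul_conj, hnsζ]; simp
  have hconj : ∀ i, (starRingEnd ℂ) (1 - (starRingEnd ℂ) (α i) * ζ) = ζ⁻¹ * (ζ - α i) := by
    intro i
    rw [map_sub, map_one, map_mul, Complex.conj_conj]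
    field_simp
    linear_combination (-(α i)) * hmc
  have hd : HasDerivAt (fun z : ℂ => ∏ i, (z - α i) / (1 - (starRingEnd ℂ) (α i) * z))
      (∑ i, (∏ j ∈ Finset.univ.erase i, (ζ - α j) / (1 - (starRingEnd ℂ) (α j) * ζ)) •
        ((1 - (starRingEnd ℂ) (α i) * (α i)) / (1 - (starRingEnd ℂ) (α i) * ζ)^2)) ζ :=
    HasDerivAt.fun_finsetProd (u := Finset.univ) (fun i _ => blaschke_factor_hasDeriv (α i) ζ (hden i))
  have hBQval : ∀ i, ((BQ (‖α i‖) (θ - Complex.arg (α i)) : ℝ) : ℂ)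
      = (1 - (starRingEnd ℂ) (α i) * (α i)) /
        ((1 - (starRingEnd ℂ) (α i) * ζ) * (starRingEnd ℂ) (1 - (starRingEnd ℂ) (α i) * ζ)) := by
    intro i
    rw [Complex.mul_conj]
    have hns := normSq_one_sub (α i) θ
    rw [← hζdef] at hns
    unfold BQ
    rw [← hns]
    have hca : (starRingEnd ℂ) (α i) * (α i) = ((‖α i‖ ^ 2 : ℝ) : ℂ) := by
      rw [mul_comm, Complex.mul_conj, Complex.normSq_eq_norm_sq]
    rw [hca]
    push_cast
    ring
  have hkey : ∀ i, (∏ j ∈ Finset.univ.erase i, (ζ - α j) / (1 - (starRingEnd ℂ) (α j) * ζ)) •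
        ((1 - (starRingEnd ℂ) (α i) * (α i)) / (1 - (starRingEnd ℂ) (α i) * ζ)^2)
      = (∏ j, (ζ - α j) / (1 - (starRingEnd ℂ) (α j) * ζ)) * ζ⁻¹ *
        ((BQ (‖α i‖) (θ - Complex.arg (α i)) : ℝ) : ℂ) := by
    intro i
    have h1 := hden i
    have h2 := hnum i
    have hscal : (1 - (starRingEnd ℂ) (α i) * α i) / (1 - (starRingEnd ℂ) (α i) * ζ)^2
        = ((ζ - α i) / (1 - (starRingEnd ℂ) (α i) * ζ)) * ζ⁻¹ *
          ((1 - (starRingEnd ℂ) (α i) * α i) /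
            ((1 - (starRingEnd ℂ) (α i) * ζ) * (ζ⁻¹ * (ζ - α i)))) := by
      field_simp
    rw [smul_eq_mul, hBQval i, hconj i,
      ← Finset.prod_erase_mul Finset.univ
        (fun j => (ζ - α j) / (1 - (starRingEnd ℂ) (α j) * ζ)) (Finset.mem_univ i), hscal]
    ring
  have hsum : (∑ i, (∏ j ∈ Finset.univ.erase i, (ζ - α j) / (1 - (starRingEnd ℂ) (α j) * ζ)) •
        ((1 - (starRingEnd ℂ) (α i) * (α i)) / (1 - (starRingEnd ℂ) (α i) * ζ)^2))
      = (∏ j, (ζ - α j) / (1 - (starRingEnd ℂ) (α j) * ζ)) * ζ⁻¹ *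
        ((∑ i, BQ (‖α i‖) (θ - Complex.arg (α i)) : ℝ) : ℂ) := by
    rw [Finset.sum_congr rfl (fun i _ => hkey i), ← Finset.mul_sum]
    norm_cast
  have hBabs : ‖∏ j, (ζ - α j) / (1 - (starRingEnd ℂ) (α j) * ζ)‖ = 1 := by
    rw [norm_prod]
    apply Finset.prod_eq_one
    intro j _
    have h := congrArg norm (hconj j)
    rw [Complex.norm_conj, norm_mul, norm_inv, hζ, inv_one, one_mul] at h
    rw [norm_div, ← h]
    exact div_self (norm_ne_zero_iff.mpr (hden j))
  have hSnn : 0 ≤ ∑ i, BQ (‖α i‖) (θ - Complex.arg (α i)) :=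
    Finset.sum_nonneg fun i _ =>
      (BQ_pos (norm_nonneg (α i)) (hα i) _).le
  rw [hd.deriv, hsum, norm_mul, norm_mul, hBabs, norm_inv, hζ, inv_one,
    Complex.norm_real, Real.norm_eq_abs, abs_of_nonneg hSnn, one_mul, one_mul]

lemma shift_integral (r φ p : ℝ) :
    (∫ θ in (0:ℝ)..(2*π), BQ r (θ - φ) ^ p) = ∫ θ in (0:ℝ)..(2*π), BQ r θ ^ p := by
  rw [intervalIntegral.integral_comp_sub_right (fun θ => BQ r θ ^ p) φ]
  have hP : Function.Periodic (fun θ => BQ r θ ^ p) (2*π) := (BQ_periodic r).comp (·^p)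
  have h := hP.intervalIntegral_add_eq (0 - φ) 0
  rw [zero_add] at h
  rw [show (2*π - φ) = 0 - φ + 2*π by ring]
  exact h

lemma sum_rpow_le {n : ℕ} {p : ℝ} (hp : 1 ≤ p) (x : Fin n → ℝ) (hx : ∀ i, 0 ≤ x i)
    [Nonempty (Fin n)] :
    (∑ i, x i) ^ p ≤ (n:ℝ)^p * ∑ i, (x i)^p := by
  have hp0 : (0:ℝ) ≤ p := by linarith
  obtain ⟨j, hj⟩ := Finite.exists_max x
  have h1 : ∑ i, x i ≤ (n:ℝ) * x j := by
    calc ∑ i, x i ≤ ∑ _i : Fin n, x j := Finset.sum_le_sum (fun i _ => hj i)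
      _ = (n:ℝ) * x j := by simp [Finset.sum_const, Finset.card_univ, mul_comm]
  calc (∑ i, x i)^p ≤ ((n:ℝ) * x j)^p :=
        Real.rpow_le_rpow (Finset.sum_nonneg fun i _ => hx i) h1 hp0
    _ = (n:ℝ)^p * (x j)^p := Real.mul_rpow (Nat.cast_nonneg n) (hx j)
    _ ≤ (n:ℝ)^p * ∑ i, (x i)^p := by
        apply mul_le_mul_of_nonneg_left
          (Finset.single_le_sum (fun i _ => Real.rpow_nonneg (hx i) p) (Finset.mem_univ j))
          (Real.rpow_nonneg (Nat.cast_nonneg n) p)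

set_option maxHeartbeats 1000000 in
/-- For a finite Blaschke product `b` with zeros `α₁,…,αₙ ∈ 𝔻` and
`δ(b) = minᵢ (1 − |αᵢ|)`, one has `∫_𝕋 |b′|^𝔭 ≈ δ(b)^{1−𝔭}`, with constants depending only
on `n` and `𝔭`. -/
theorem blaschke_derivative_integral_comparable (n : ℕ) (hn : 0 < n) (p : ℝ) (hp : 1 ≤ p) :
    ∃ c C : ℝ, 0 < c ∧ 0 < C ∧
      ∀ α : Fin n → ℂ, (∀ i, ‖α i‖ < 1) →
        c * (⨅ i, (1 - ‖α i‖)) ^ (1 - p) ≤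
            (∫ θ in (0 : ℝ)..(2 * π),
              ‖
                (deriv (fun z : ℂ => ∏ i, (z - α i) / (1 - (starRingEnd ℂ) (α i) * z))
                  (Complex.exp (θ * Complex.I)))‖ ^ p) ∧
          (∫ θ in (0 : ℝ)..(2 * π),
              ‖
                (deriv (fun z : ℂ => ∏ i, (z - α i) / (1 - (starRingEnd ℂ) (α i) * z))
                  (Complex.exp (θ * Complex.I)))‖ ^ p) ≤
            C * (⨅ i, (1 - ‖α i‖)) ^ (1 - p) := by
  have hp0 : (0:ℝ) ≤ p := by linarith
  have hπ := Real.pi_pos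
  have hn' : (0:ℝ) < (n:ℝ) := Nat.cast_pos.mpr hn
  have hC0 : (0:ℝ) < 2*π*3^p + 4*π^(2*p) := by
    have := Real.rpow_pos_of_pos (show (0:ℝ) < 3 by norm_num) p
    have := Real.rpow_pos_of_pos hπ (2*p)
    positivity
  refine ⟨(1/2:ℝ)^p, (n:ℝ)^p * n * (2*π*3^p + 4*π^(2*p)),
    Real.rpow_pos_of_pos (by norm_num) p,
    by positivity, ?_⟩
  intro α hα
  haveI : Nonempty (Fin n) := Fin.pos_iff_nonempty.mp hn
  have hr0 : ∀ i, 0 ≤ ‖α i‖ := fun i => norm_nonneg _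
  set δ := ⨅ i, (1 - ‖α i‖) with hδdef
  obtain ⟨i₀, hi₀⟩ := Finite.exists_min fun i => 1 - ‖α i‖
  have hδeq : δ = 1 - ‖α i₀‖ :=
    le_antisymm (ciInf_le (Finite.bddBelow_range _) i₀) (le_ciInf hi₀)
  have hδpos : 0 < δ := by rw [hδeq]; linarith [hα i₀]
  have hδle : ∀ i, δ ≤ 1 - ‖α i‖ := fun i => hδeq ▸ hi₀ i
  -- rewrite the integral
  have hcongr : (∫ θ in (0 : ℝ)..(2 * π),
        ‖
          (deriv (fun z : ℂ => ∏ i, (z - α i) / (1 - (starRingEnd ℂ) (α i) * z))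
            (Complex.exp (θ * Complex.I)))‖ ^ p)
      = ∫ θ in (0:ℝ)..(2*π),
          (∑ i, BQ (‖α i‖) (θ - Complex.arg (α i))) ^ p := by
    apply intervalIntegral.integral_congr
    intro θ _
    simp only [blaschke_deriv_abs α hα]
  rw [hcongr]
  have hScont : Continuous fun θ => ∑ i, BQ (‖α i‖) (θ - Complex.arg (α i)) :=
    continuous_finset_sum _ (fun i _ =>
      (BQ_cont (hr0 i) (hα i)).comp (by fun_prop))
  have hSpcont : Continuous fun θ =>
      (∑ i, BQ (‖α i‖) (θ - Complex.arg (α i))) ^ p :=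
    hScont.rpow_const (fun _ => Or.inr hp0)
  have hQicont : ∀ i : Fin n, Continuous fun θ =>
      BQ (‖α i‖) (θ - Complex.arg (α i)) ^ p := fun i =>
    ((BQ_cont (hr0 i) (hα i)).comp (by fun_prop)).rpow_const (fun _ => Or.inr hp0)
  constructor
  · -- lower bound
    have hpt : ∀ θ ∈ Set.Icc (0:ℝ) (2*π),
        BQ (‖α i₀‖) (θ - Complex.arg (α i₀)) ^ p
          ≤ (∑ i, BQ (‖α i‖) (θ - Complex.arg (α i))) ^ p := by
      intro θ _
      apply Real.rpow_le_rpow (BQ_pos (hr0 i₀) (hα i₀) _).le _ hp0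
      exact Finset.single_le_sum
        (f := fun i => BQ (‖α i‖) (θ - Complex.arg (α i)))
        (fun i _ => (BQ_pos (hr0 i) (hα i) _).le) (Finset.mem_univ i₀)
    have hm := intervalIntegral.integral_mono_on (by positivity)
      (((hQicont i₀).intervalIntegrable _ _ : IntervalIntegrable _ MeasureTheory.volume _ _))
      (hSpcont.intervalIntegrable _ _) hpt
    have hshift := shift_integral (‖α i₀‖) (Complex.arg (α i₀)) p
    have hlow := BQ_int_lower hp (hr0 i₀) (hα i₀)
    rw [hδeq]
    calc (1/2:ℝ)^p * (1 - ‖α i₀‖)^(1-p)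
        ≤ ∫ θ in (0:ℝ)..(2*π), BQ (‖α i₀‖) θ ^ p := hlow
      _ = ∫ θ in (0:ℝ)..(2*π), BQ (‖α i₀‖) (θ - Complex.arg (α i₀)) ^ p :=
          hshift.symm
      _ ≤ _ := hm
  · -- upper bound
    have hpt : ∀ θ ∈ Set.Icc (0:ℝ) (2*π),
        (∑ i, BQ (‖α i‖) (θ - Complex.arg (α i))) ^ p
          ≤ (n:ℝ)^p * ∑ i, BQ (‖α i‖) (θ - Complex.arg (α i)) ^ p := by
      intro θ _
      exact sum_rpow_le hp _ (fun i => (BQ_pos (hr0 i) (hα i) _).le)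
    have hRHScont : Continuous fun θ =>
        (n:ℝ)^p * ∑ i, BQ (‖α i‖) (θ - Complex.arg (α i)) ^ p :=
      continuous_const.mul (continuous_finset_sum _ (fun i _ => hQicont i))
    have hm := intervalIntegral.integral_mono_on (by positivity)
      ((hSpcont.intervalIntegrable _ _ : IntervalIntegrable _ MeasureTheory.volume _ _))
      (hRHScont.intervalIntegrable _ _) hpt
    have hmul : (∫ θ in (0:ℝ)..(2*π),
          (n:ℝ)^p * ∑ i, BQ (‖α i‖) (θ - Complex.arg (α i)) ^ p)
        = (n:ℝ)^p * ∫ θ in (0:ℝ)..(2*π),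
            ∑ i, BQ (‖α i‖) (θ - Complex.arg (α i)) ^ p :=
      intervalIntegral.integral_const_mul _ _
    have hsum : (∫ θ in (0:ℝ)..(2*π),
          ∑ i, BQ (‖α i‖) (θ - Complex.arg (α i)) ^ p)
        = ∑ i, ∫ θ in (0:ℝ)..(2*π),
            BQ (‖α i‖) (θ - Complex.arg (α i)) ^ p :=
      intervalIntegral.integral_finset_sum
        (fun i _ => (hQicont i).intervalIntegrable _ _)
    have hbound : ∀ i : Fin n, (∫ θ in (0:ℝ)..(2*π),
          BQ (‖α i‖) (θ - Complex.arg (α i)) ^ p)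
        ≤ (2*π*3^p + 4*π^(2*p)) * δ^(1-p) := by
      intro i
      rw [shift_integral]
      calc (∫ θ in (0:ℝ)..(2*π), BQ (‖α i‖) θ ^ p)
          ≤ (2*π*3^p + 4*π^(2*p)) * (1 - ‖α i‖)^(1-p) :=
            BQ_int_upper hp (hr0 i) (hα i)
        _ ≤ (2*π*3^p + 4*π^(2*p)) * δ^(1-p) := by
            apply mul_le_mul_of_nonneg_left
              (Real.rpow_le_rpow_of_nonpos hδpos (hδle i) (by linarith)) hC0.le
    calc (∫ θ in (0:ℝ)..(2*π),
          (∑ i, BQ (‖α i‖) (θ - Complex.arg (α i))) ^ p)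
        ≤ (n:ℝ)^p * ∑ i, ∫ θ in (0:ℝ)..(2*π),
            BQ (‖α i‖) (θ - Complex.arg (α i)) ^ p := by
          rw [← hsum, ← hmul]; exact hm
      _ ≤ (n:ℝ)^p * ∑ _i : Fin n, (2*π*3^p + 4*π^(2*p)) * δ^(1-p) := by
          apply mul_le_mul_of_nonneg_left (Finset.sum_le_sum (fun i _ => hbound i))
            (Real.rpow_nonneg (Nat.cast_nonneg n) p)
      _ = (n:ℝ)^p * n * (2*π*3^p + 4*π^(2*p)) * δ^(1-p) := by
          rw [Finset.sum_const, Finset.card_univ]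
          simp [Fintype.card_fin]
          ring
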